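/- For each γ ≥ 0 and each nonnegative weight vector α, let x*(γ, α) be the unique minimizer of (1/2)Σ_{t=1}^n (x_t − y_t)² + γ Σ_{t=1}^{n-1} α_t |x_{t+1} − x_t|. Then the map (γ, α) ↦ x*(γ, α) is continuous on {(γ, α) : γ ≥ 0, α ≥ 0}. -/

import Mathlib

/-- Objective of the weighted 1-D fused lasso on an input of size `n+1`. -/
noncomputable def fusedObj (n : ℕ) (y : Fin (n + 1) → ℝ) (α : Fin n → ℝ) (γ : ℝ)
    (x : Fin (n + 1) → ℝ) : ℝ :=
  (1 / 2) * ∑ t, (x t - y t) ^ 2 + γ * ∑ t : Fin n, α t * |x t.succ - x t.castSucc|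

/-- The weighted fused lasso solution `x*(γ, α)` is continuous jointly in the penalty
parameter `γ ≥ 0` and the nonnegative weight vector `α`. -/
theorem fused_lasso_solution_continuous (n : ℕ) (y : Fin (n + 1) → ℝ)
    (x : ℝ × (Fin n → ℝ) → Fin (n + 1) → ℝ)
    (hx : ∀ p : ℝ × (Fin n → ℝ), 0 ≤ p.1 → (∀ t, 0 ≤ p.2 t) →
      ∀ v, fusedObj n y p.2 p.1 (x p) ≤ fusedObj n y p.2 p.1 v) :
    ContinuousOn x {p : ℝ × (Fin n → ℝ) | 0 ≤ p.1 ∧ ∀ t, 0 ≤ p.2 t} := by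
  set S : Set (ℝ × (Fin n → ℝ)) := {p : ℝ × (Fin n → ℝ) | 0 ≤ p.1 ∧ ∀ t, 0 ≤ p.2 t}
    with hSdef
  set C : ℝ × (Fin n → ℝ) → ℝ :=
    fun p => p.1 * ∑ t : Fin n, p.2 t * |y t.succ - y t.castSucc| with hCdef
  -- continuity of C
  have hCcont : Continuous C := by
    apply continuous_fst.mul
    exact continuous_finset_sum _ fun t _ =>
      ((continuous_apply t).comp continuous_snd).mul continuous_const
  -- nonnegativity of the penalty
  have hpen_nonneg : ∀ p ∈ S, ∀ z : Fin (n + 1) → ℝ,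
      0 ≤ p.1 * ∑ t : Fin n, p.2 t * |z t.succ - z t.castSucc| := by
    intro p hp z
    exact mul_nonneg hp.1 (Finset.sum_nonneg fun t _ => mul_nonneg (hp.2 t) (abs_nonneg _))
  -- coordinatewise bound for the minimizer
  have hbound : ∀ p ∈ S, ∀ t : Fin (n + 1), |x p t - y t| ≤ Real.sqrt (2 * C p) := by
    intro p hp t
    have hopt := hx p hp.1 hp.2 y
    have hsum : ∑ s : Fin (n + 1), (x p s - y s) ^ 2 ≤ 2 * C p := by
      have hpen := hpen_nonneg p hp (x p)
      simp only [fusedObj] at hopt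
      have hy0 : ∑ t : Fin (n + 1), (y t - y t) ^ 2 = 0 := by simp
      rw [hy0] at hopt
      simp only [hCdef]
      linarith
    have hone : (x p t - y t) ^ 2 ≤ ∑ s : Fin (n + 1), (x p s - y s) ^ 2 :=
      Finset.single_le_sum (f := fun s => (x p s - y s) ^ 2)
        (fun s _ => sq_nonneg _) (Finset.mem_univ t)
    calc |x p t - y t| = Real.sqrt ((x p t - y t) ^ 2) := (Real.sqrt_sq_eq_abs _).symm
      _ ≤ Real.sqrt (2 * C p) := Real.sqrt_le_sqrt (le_trans hone hsum)
  -- difference bound on increments of the minimizer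
  have hΔbound : ∀ p ∈ S, ∀ t : Fin n,
      |x p t.succ - x p t.castSucc| ≤
        2 * Real.sqrt (2 * C p) + |y t.succ - y t.castSucc| := by
    intro p hp t
    have h1 := hbound p hp t.succ
    have h2 := hbound p hp t.castSucc
    have heq : x p t.succ - x p t.castSucc =
        (x p t.succ - y t.succ) + (y t.succ - y t.castSucc) +
          (y t.castSucc - x p t.castSucc) := by ring
    rw [heq]
    have h3 : |(x p t.succ - y t.succ) + (y t.succ - y t.castSucc) +
        (y t.castSucc - x p t.castSucc)| ≤
        |x p t.succ - y t.succ| + |y t.succ - y t.castSucc| +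
          |y t.castSucc - x p t.castSucc| :=
      (abs_add_le _ _).trans (add_le_add_left (abs_add_le _ _) _)
    have h4 : |y t.castSucc - x p t.castSucc| ≤ Real.sqrt (2 * C p) := by
      rw [abs_sub_comm]; exact h2
    linarith
  -- strong convexity estimate
  have hstrong : ∀ p ∈ S, ∀ v : Fin (n + 1) → ℝ,
      (1 / 4) * ∑ t : Fin (n + 1), (v t - x p t) ^ 2 ≤
        fusedObj n y p.2 p.1 v - fusedObj n y p.2 p.1 (x p) := by
    intro p hp v
    have hm := hx p hp.1 hp.2 (fun t => (x p t + v t) / 2)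
    simp only [fusedObj] at hm ⊢
    have hq : ∑ t : Fin (n + 1), ((x p t + v t) / 2 - y t) ^ 2 =
        (1 / 2) * ∑ t : Fin (n + 1), (x p t - y t) ^ 2 +
          (1 / 2) * ∑ t : Fin (n + 1), (v t - y t) ^ 2 -
          (1 / 4) * ∑ t : Fin (n + 1), (v t - x p t) ^ 2 := by
      rw [Finset.mul_sum, Finset.mul_sum, Finset.mul_sum, ← Finset.sum_add_distrib,
        ← Finset.sum_sub_distrib]
      exact Finset.sum_congr rfl fun t _ => by ring
    have hpen : p.1 * ∑ t : Fin n, p.2 t *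
        |(x p t.succ + v t.succ) / 2 - (x p t.castSucc + v t.castSucc) / 2| ≤
        (1 / 2) * (p.1 * ∑ t : Fin n, p.2 t * |x p t.succ - x p t.castSucc|) +
          (1 / 2) * (p.1 * ∑ t : Fin n, p.2 t * |v t.succ - v t.castSucc|) := by
      have hsum : ∑ t : Fin n, p.2 t *
          |(x p t.succ + v t.succ) / 2 - (x p t.castSucc + v t.castSucc) / 2| ≤
          ∑ t : Fin n, p.2 t *
            ((|x p t.succ - x p t.castSucc| + |v t.succ - v t.castSucc|) / 2) := by
        refine Finset.sum_le_sum fun t _ => mul_le_mul_of_nonneg_left ?_ (hp.2 t)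
        have heq : (x p t.succ + v t.succ) / 2 - (x p t.castSucc + v t.castSucc) / 2 =
            ((x p t.succ - x p t.castSucc) + (v t.succ - v t.castSucc)) / 2 := by ring
        rw [heq, abs_div]
        have := abs_add_le (x p t.succ - x p t.castSucc) (v t.succ - v t.castSucc)
        have h2 : |(2 : ℝ)| = 2 := by norm_num
        rw [h2]
        linarith
      have := mul_le_mul_of_nonneg_left hsum hp.1
      calc p.1 * ∑ t : Fin n, p.2 t *
            |(x p t.succ + v t.succ) / 2 - (x p t.castSucc + v t.castSucc) / 2| ≤
          p.1 * ∑ t : Fin n, p.2 t *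
            ((|x p t.succ - x p t.castSucc| + |v t.succ - v t.castSucc|) / 2) := this
        _ = (1 / 2) * (p.1 * ∑ t : Fin n, p.2 t * |x p t.succ - x p t.castSucc|) +
            (1 / 2) * (p.1 * ∑ t : Fin n, p.2 t * |v t.succ - v t.castSucc|) := by
          rw [Finset.mul_sum, Finset.mul_sum, Finset.mul_sum, Finset.mul_sum,
            Finset.mul_sum, ← Finset.sum_add_distrib]
          exact Finset.sum_congr rfl fun t _ => by ring
    linarith
  -- bound on the difference of objectives with the same argument
  have hdiff : ∀ (p q : ℝ × (Fin n → ℝ)) (z : Fin (n + 1) → ℝ),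
      |fusedObj n y p.2 p.1 z - fusedObj n y q.2 q.1 z| ≤
        ∑ t : Fin n, |p.1 * p.2 t - q.1 * q.2 t| * |z t.succ - z t.castSucc| := by
    intro p q z
    have heq : fusedObj n y p.2 p.1 z - fusedObj n y q.2 q.1 z =
        ∑ t : Fin n, (p.1 * p.2 t - q.1 * q.2 t) * |z t.succ - z t.castSucc| := by
      simp only [fusedObj, Finset.mul_sum]
      rw [add_sub_add_left_eq_sub, ← Finset.sum_sub_distrib]
      exact Finset.sum_congr rfl fun t _ => by ring
    rw [heq]
    refine (Finset.abs_sum_le_sum_abs _ _).trans (le_of_eq ?_)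
    exact Finset.sum_congr rfl fun t _ => by rw [abs_mul, abs_abs]
  -- main quantitative stability bound
  have hmain : ∀ p ∈ S, ∀ q ∈ S,
      ∑ t : Fin (n + 1), (x q t - x p t) ^ 2 ≤
        4 * ∑ t : Fin n, |p.1 * p.2 t - q.1 * q.2 t| *
          (2 * Real.sqrt (2 * C p) + 2 * Real.sqrt (2 * C q) +
            2 * |y t.succ - y t.castSucc|) := by
    intro p hp q hq
    have h1 := hstrong p hp (x q)
    have h2 := hx q hq.1 hq.2 (x p)
    have h3 := hdiff p q (x q)
    have h4 := hdiff p q (x p)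
    have h3' : fusedObj n y p.2 p.1 (x q) - fusedObj n y q.2 q.1 (x q) ≤
        ∑ t : Fin n, |p.1 * p.2 t - q.1 * q.2 t| * |x q t.succ - x q t.castSucc| :=
      (le_abs_self _).trans h3
    have h4' : fusedObj n y q.2 q.1 (x p) - fusedObj n y p.2 p.1 (x p) ≤
        ∑ t : Fin n, |p.1 * p.2 t - q.1 * q.2 t| * |x p t.succ - x p t.castSucc| := by
      rw [abs_sub_comm] at h4
      exact (le_abs_self _).trans h4
    have h5 : (∑ t : Fin n, |p.1 * p.2 t - q.1 * q.2 t| * |x q t.succ - x q t.castSucc|) +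
        (∑ t : Fin n, |p.1 * p.2 t - q.1 * q.2 t| * |x p t.succ - x p t.castSucc|) ≤
        ∑ t : Fin n, |p.1 * p.2 t - q.1 * q.2 t| *
          (2 * Real.sqrt (2 * C p) + 2 * Real.sqrt (2 * C q) +
            2 * |y t.succ - y t.castSucc|) := by
      rw [← Finset.sum_add_distrib]
      refine Finset.sum_le_sum fun t _ => ?_
      have hbq := hΔbound q hq t
      have hbp := hΔbound p hp t
      have habs : (0 : ℝ) ≤ |p.1 * p.2 t - q.1 * q.2 t| := abs_nonneg _
      nlinarith [abs_nonneg (x q t.succ - x q t.castSucc),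
        abs_nonneg (x p t.succ - x p t.castSucc), Real.sqrt_nonneg (2 * C p),
        Real.sqrt_nonneg (2 * C q), abs_nonneg (y t.succ - y t.castSucc)]
    linarith
  -- now prove continuity coordinatewise
  rw [continuousOn_pi]
  intro i
  intro p hp
  have hp' : p ∈ S := hp
  -- the comparison function
  set R : ℝ × (Fin n → ℝ) → ℝ := fun q =>
    4 * ∑ t : Fin n, |p.1 * p.2 t - q.1 * q.2 t| *
      (2 * Real.sqrt (2 * C p) + 2 * Real.sqrt (2 * C q) +
        2 * |y t.succ - y t.castSucc|) with hRdef
  have hRcont : Continuous R := by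
    apply continuous_const.mul
    apply continuous_finset_sum
    intro t _
    refine Continuous.mul ?_ ?_
    · apply Continuous.abs
      apply Continuous.sub continuous_const
      exact continuous_fst.mul ((continuous_apply t).comp continuous_snd)
    · exact (continuous_const.add
        (continuous_const.mul (Real.continuous_sqrt.comp
          (continuous_const.mul hCcont)))).add continuous_const
  have hRp : R p = 0 := by
    simp [hRdef]
  have hRnonneg : ∀ q, 0 ≤ R q := by
    intro q
    refine mul_nonneg (by norm_num) (Finset.sum_nonneg fun t _ => mul_nonneg (abs_nonneg _) ?_)
    have := Real.sqrt_nonneg (2 * C p)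
    have := Real.sqrt_nonneg (2 * C q)
    have := abs_nonneg (y t.succ - y t.castSucc)
    linarith
  -- continuity within S at p of the i-th coordinate
  have hsqrt : Filter.Tendsto (fun q => Real.sqrt (R q)) (nhdsWithin p S) (nhds 0) := by
    have h := ((Real.continuous_sqrt.comp hRcont).tendsto p).mono_left
      (nhdsWithin_le_nhds (s := S))
    simpa [Function.comp_def, hRp] using h
  have hdist : Filter.Tendsto (fun q => dist (x q i) (x p i)) (nhdsWithin p S) (nhds 0) := by
    refine squeeze_zero' (Filter.Eventually.of_forall fun q => dist_nonneg) ?_ hsqrt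
    filter_upwards [self_mem_nhdsWithin] with q hq
    have hq' : q ∈ S := hq
    have hone : (x q i - x p i) ^ 2 ≤ ∑ t : Fin (n + 1), (x q t - x p t) ^ 2 :=
      Finset.single_le_sum (f := fun t => (x q t - x p t) ^ 2)
        (fun t _ => sq_nonneg _) (Finset.mem_univ i)
    have hle : (x q i - x p i) ^ 2 ≤ R q := le_trans hone (hmain p hp' q hq')
    have hde : dist (x q i) (x p i) = |x q i - x p i| := Real.dist_eq _ _
    rw [hde, ← Real.sqrt_sq_eq_abs]
    exact Real.sqrt_le_sqrt hle
  exact tendsto_iff_dist_tendsto_zero.mpr hdist
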